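/- Let f : ℝ^d → ℝ have L₃-Lipschitz third-order derivatives, let u ∈ ℝ^d, let δ ∈ ℝ^d be a unit vector, and let α > 0. If δᵀ∇²f(u)δ = −α/2, then for every 0 ≤ η ≤ √(3α/L₃), min{f(u − ηδ), f(u + ηδ)} ≤ f(u) − αη²/8. -/

import Mathlib

private lemma mono_helper {F G : ℝ → ℝ} (hF : Differentiable ℝ F) (hG : Differentiable ℝ G)
    (h0 : F 0 ≤ G 0) (hd : ∀ x : ℝ, 0 ≤ x → deriv F x ≤ deriv G x) :
    ∀ t : ℝ, 0 ≤ t → F t ≤ G t := by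
  intro t ht
  have hmono : MonotoneOn (fun x => G x - F x) (Set.Ici (0:ℝ)) := by
    apply monotoneOn_of_deriv_nonneg (convex_Ici 0)
      ((hG.sub hF).continuous.continuousOn)
      ((hG.sub hF).differentiableOn)
    intro x hx
    rw [interior_Ici] at hx
    rw [deriv_sub (hG x) (hF x)]
    have := hd x (le_of_lt hx)
    linarith
  have h2 := hmono Set.self_mem_Ici (Set.mem_Ici.mpr ht) ht
  simp only at h2
  linarith

private lemma iteratedDeriv_add' {n : ℕ} {f g : ℝ → ℝ} (hf : ContDiff ℝ n f)
    (hg : ContDiff ℝ n g) (x : ℝ) :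
    iteratedDeriv n (fun t => f t + g t) x = iteratedDeriv n f x + iteratedDeriv n g x := by
  simp only [← iteratedDerivWithin_univ]
  exact iteratedDerivWithin_add (Set.mem_univ x) uniqueDiffOn_univ hf.contDiffWithinAt hg.contDiffWithinAt

private lemma taylor_sym {h : ℝ → ℝ} {L : ℝ} (hL : 0 < L) (hh : ContDiff ℝ 3 h)
    (hlip : ∀ θ₁ θ₂ : ℝ, |iteratedDeriv 3 h θ₁ - iteratedDeriv 3 h θ₂| ≤ L * |θ₁ - θ₂|) :
    ∀ t : ℝ, 0 ≤ t →
      h t + h (-t) ≤ 2 * h 0 + iteratedDeriv 2 h 0 * t ^ 2 + L * t ^ 4 / 12 := by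
  have hneg : ContDiff ℝ 3 (fun t : ℝ => h (-t)) := hh.comp contDiff_neg
  set g : ℝ → ℝ := fun t => h t + h (-t) with hgdef
  have hg : ContDiff ℝ 3 g := hh.add hneg
  have hgn : ∀ n : ℕ, ((n : WithTop ℕ∞) ≤ 3) → ∀ x : ℝ, iteratedDeriv n g x =
      iteratedDeriv n h x + (-1 : ℝ) ^ n * iteratedDeriv n h (-x) := by
    intro n hn x
    have h2 : ContDiff ℝ n (fun t : ℝ => h (-t)) := hneg.of_le hn
    have h1 := iteratedDeriv_add' (hh.of_le hn) h2 x
    rw [hgdef, h1, iteratedDeriv_comp_neg]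
    simp [smul_eq_mul]
  have hd2 : Differentiable ℝ (iteratedDeriv 2 g) :=
    hg.differentiable_iteratedDeriv 2 (by norm_num)
  have hd1 : Differentiable ℝ (deriv g) := by
    have := hg.differentiable_iteratedDeriv 1 (by norm_num)
    rwa [iteratedDeriv_one] at this
  have hd0 : Differentiable ℝ g := hg.differentiable (by norm_num)
  -- Step 1 : second derivative bound
  have step1 : ∀ t : ℝ, 0 ≤ t →
      iteratedDeriv 2 g t ≤ iteratedDeriv 2 g 0 + L * t ^ 2 := by
    apply mono_helper hd2 ((differentiable_pow 2).const_mul L |>.const_add _)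
    · simp
    · intro x hx
      have hder : deriv (fun x : ℝ => iteratedDeriv 2 g 0 + L * x ^ 2) x = L * (2 * x) := by
        have h1 : HasDerivAt (fun x : ℝ => iteratedDeriv 2 g 0 + L * x ^ 2)
            (L * ((2:ℕ) * x ^ 1)) x := ((hasDerivAt_pow 2 x).const_mul L).const_add _
        simpa using h1.deriv
      rw [hder, ← iteratedDeriv_succ]
      have hval := hgn 3 (by norm_num) x
      have habs := hlip x (-x)
      rw [sub_neg_eq_add, abs_of_nonneg (by linarith : (0:ℝ) ≤ x + x)] at habs
      have hle := le_of_abs_le habs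
      norm_num at hval ⊢
      rw [hval]
      linarith
  -- Step 2 : first derivative bound
  have step2 : ∀ t : ℝ, 0 ≤ t →
      deriv g t ≤ deriv g 0 + iteratedDeriv 2 g 0 * t + L / 3 * t ^ 3 := by
    apply mono_helper hd1
    · fun_prop
    · simp
    · intro x hx
      have hder : deriv (fun x : ℝ => deriv g 0 + (iteratedDeriv 2 g 0 * x + L / 3 * x ^ 3)) x
          = iteratedDeriv 2 g 0 + L * x ^ 2 := by
        have h1 : HasDerivAt (fun x : ℝ => deriv g 0 + (iteratedDeriv 2 g 0 * x + L / 3 * x ^ 3))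
            (iteratedDeriv 2 g 0 * 1 + L / 3 * ((3:ℕ) * x ^ 2)) x :=
          (((hasDerivAt_id x).const_mul _).add ((hasDerivAt_pow 3 x).const_mul (L/3))).const_add _
        have := h1.deriv
        rw [this]; push_cast; ring
      have hgoal : deriv (fun x : ℝ => deriv g 0 + iteratedDeriv 2 g 0 * x + L / 3 * x ^ 3) x
          = iteratedDeriv 2 g 0 + L * x ^ 2 := by
        rw [← hder]; congr 1; funext y; ring
      rw [hgoal]
      have e2 : iteratedDeriv 2 g = deriv (deriv g) := by
        show iteratedDeriv (1+1) g = _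
        rw [iteratedDeriv_succ, iteratedDeriv_one]
      rw [← e2]
      exact step1 x hx
  -- Step 3 : function bound
  have step3 : ∀ t : ℝ, 0 ≤ t →
      g t ≤ g 0 + deriv g 0 * t + iteratedDeriv 2 g 0 / 2 * t ^ 2 + L / 12 * t ^ 4 := by
    apply mono_helper hd0
    · fun_prop
    · simp
    · intro x hx
      have h1 : HasDerivAt (fun x : ℝ => g 0 + (deriv g 0 * x + iteratedDeriv 2 g 0 / 2 * x ^ 2
            + L / 12 * x ^ 4))
          (deriv g 0 * 1 + iteratedDeriv 2 g 0 / 2 * ((2:ℕ) * x ^ 1)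
            + L / 12 * ((4:ℕ) * x ^ 3)) x :=
        ((((hasDerivAt_id x).const_mul _).add
          ((hasDerivAt_pow 2 x).const_mul _)).add
          ((hasDerivAt_pow 4 x).const_mul (L/12))).const_add _
      have hder := h1.deriv
      have hgoal : deriv (fun x : ℝ => g 0 + deriv g 0 * x + iteratedDeriv 2 g 0 / 2 * x ^ 2
            + L / 12 * x ^ 4) x
          = deriv g 0 + iteratedDeriv 2 g 0 * x + L / 3 * x ^ 3 := by
        rw [show (fun x : ℝ => g 0 + deriv g 0 * x + iteratedDeriv 2 g 0 / 2 * x ^ 2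
            + L / 12 * x ^ 4) = (fun x : ℝ => g 0 + (deriv g 0 * x
            + iteratedDeriv 2 g 0 / 2 * x ^ 2 + L / 12 * x ^ 4)) from by funext y; ring]
        rw [hder]; push_cast; ring
      rw [hgoal]
      exact step2 x hx
  intro t ht
  have := step3 t ht
  have hg0 : g 0 = 2 * h 0 := by rw [hgdef]; norm_num; ring
  have hg1 : deriv g 0 = 0 := by
    have := hgn 1 (by norm_num) 0
    rw [iteratedDeriv_one] at this
    simpa using this
  have hg2 : iteratedDeriv 2 g 0 = 2 * iteratedDeriv 2 h 0 := by
    have h2 := hgn 2 (by norm_num) 0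
    norm_num at h2
    rw [h2]; ring
  have hgt : g t = h t + h (-t) := rfl
  rw [hgt, hg0, hg1, hg2] at this
  linarith

theorem negative_curvature_step_third_order
    {d : ℕ} (f : EuclideanSpace ℝ (Fin d) → ℝ)
    (L₃ : ℝ) (hL₃ : 0 < L₃)
    (hdiff : ContDiff ℝ 3 f)
    (hlip : ∀ (x₀ δ : EuclideanSpace ℝ (Fin d)), ‖δ‖ = 1 → ∀ θ₁ θ₂ : ℝ,
      |iteratedDeriv 3 (fun θ : ℝ => f (x₀ + θ • δ)) θ₁ -
        iteratedDeriv 3 (fun θ : ℝ => f (x₀ + θ • δ)) θ₂| ≤ L₃ * |θ₁ - θ₂|)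
    (u δ : EuclideanSpace ℝ (Fin d)) (hδ : ‖δ‖ = 1)
    (α : ℝ) (hα : 0 < α)
    (hcurv : iteratedDeriv 2 (fun θ : ℝ => f (u + θ • δ)) 0 = -α / 2) :
    ∀ η : ℝ, 0 ≤ η → η ≤ Real.sqrt (3 * α / L₃) →
      min (f (u - η • δ)) (f (u + η • δ)) ≤ f u - α * η ^ 2 / 8 := by
  intro η hη hηle
  have hline : ContDiff ℝ 3 (fun θ : ℝ => u + θ • δ) :=
    contDiff_const.add (contDiff_id.smul contDiff_const)
  have hh3 : ContDiff ℝ 3 (fun θ : ℝ => f (u + θ • δ)) := hdiff.comp hline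
  have hsym := taylor_sym hL₃ hh3 (hlip u δ hδ) η hη
  have p0 : u + (0:ℝ) • δ = u := by simp
  have pm : u + (-η) • δ = u - η • δ := by
    rw [neg_smul, sub_eq_add_neg]
  rw [hcurv] at hsym
  rw [pm, p0] at hsym
  have hsq : η ^ 2 ≤ 3 * α / L₃ := by
    have hnn : (0:ℝ) ≤ 3 * α / L₃ := by positivity
    calc η ^ 2 ≤ (Real.sqrt (3 * α / L₃)) ^ 2 := by
          exact pow_le_pow_left₀ hη hηle 2
      _ = 3 * α / L₃ := Real.sq_sqrt hnn
  have hLη : L₃ * η ^ 2 ≤ 3 * α := by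
    rw [le_div_iff₀ hL₃] at hsq; linarith
  have hquart : L₃ * η ^ 4 ≤ 3 * α * η ^ 2 := by nlinarith [sq_nonneg η]
  have hmin1 := min_le_left (f (u - η • δ)) (f (u + η • δ))
  have hmin2 := min_le_right (f (u - η • δ)) (f (u + η • δ))
  linarith
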